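/- With the hypotheses of the generalized power iteration, the error of the Rayleigh quotient satisfies |E^{(k)} - E_m| ≤ C·R^{2k} for some constant C, where R = max_{n≠m} |f(E_n)/f(E_m)| < 1. -/

import Mathlib

open scoped RealInnerProductSpace

theorem stmt_7 {V : Type*} [NormedAddCommGroup V] [InnerProductSpace ℝ V]
    [FiniteDimensional ℝ V] {N : ℕ}
    (H : V →ₗ[ℝ] V) (hH : LinearMap.IsSymmetric H)
    (φ : Fin (N + 1) → V) (hφ : Orthonormal ℝ φ)
    (E : Fin (N + 1) → ℝ) (hmono : StrictMono E) (hpos : ∀ n, 0 < E n)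
    (heig : ∀ n, H (φ n) = E n • φ n)
    (f : ℝ → ℝ) (F : V →ₗ[ℝ] V) (hF : ∀ n, F (φ n) = f (E n) • φ n)
    (m : Fin (N + 1)) (hdom : ∀ n, n ≠ m → |f (E n)| < |f (E m)|)
    (c : Fin (N + 1) → ℝ) (hc : c m ≠ 0) (ψ : V) (hψ : ψ = ∑ n, c n • φ n)
    (hNe : (Finset.univ.erase m).Nonempty)
    (R : ℝ)
    (hR : R = (Finset.univ.erase m).sup' hNe (fun n => |f (E n)| / |f (E m)|)) :
    R < 1 ∧ ∃ C : ℝ, ∀ k : ℕ,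
      |⟪(F ^ k) ψ, H ((F ^ k) ψ)⟫ / ⟪(F ^ k) ψ, (F ^ k) ψ⟫ - E m| ≤
        C * R ^ (2 * k) := by
  obtain ⟨n0, hn0⟩ := hNe
  have hn0m : n0 ≠ m := (Finset.mem_erase.mp hn0).1
  have ham : 0 < |f (E m)| := lt_of_le_of_lt (abs_nonneg _) (hdom n0 hn0m)
  have hR1 : R < 1 := by
    rw [hR]
    apply (Finset.sup'_lt_iff _).mpr
    intro n hn
    exact (div_lt_one ham).mpr (hdom n (Finset.mem_erase.mp hn).1)
  have hR0 : 0 ≤ R := by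
    rw [hR]
    exact le_trans (div_nonneg (abs_nonneg _) (abs_nonneg _))
      (Finset.le_sup' (f := fun n => |f (E n)| / |f (E m)|) hn0)
  -- ratio bound
  have hratio : ∀ n, n ≠ m → |f (E n)| ≤ R * |f (E m)| := by
    intro n hn
    have := Finset.le_sup' (f := fun n => |f (E n)| / |f (E m)|)
      (Finset.mem_erase.mpr ⟨hn, Finset.mem_univ n⟩)
    rw [← hR] at this
    calc |f (E n)| = |f (E n)| / |f (E m)| * |f (E m)| := by field_simp
    _ ≤ R * |f (E m)| := by
      exact mul_le_mul_of_nonneg_right this (abs_nonneg _)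
  have hsq : ∀ n, n ≠ m → f (E n) ^ 2 ≤ R ^ 2 * f (E m) ^ 2 := by
    intro n hn
    have h := hratio n hn
    calc f (E n) ^ 2 = |f (E n)| ^ 2 := (sq_abs _).symm
    _ ≤ (R * |f (E m)|) ^ 2 := by
        exact pow_le_pow_left₀ (abs_nonneg _) h 2
    _ = R ^ 2 * f (E m) ^ 2 := by rw [mul_pow, sq_abs]
  -- powers of F
  have hFk : ∀ k : ℕ, (F ^ k) ψ = ∑ n, (c n * f (E n) ^ k) • φ n := by
    intro k
    induction k with
    | zero => simp [hψ]
    | succ k ih =>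
      rw [pow_succ', Module.End.mul_apply, ih, map_sum]
      refine Finset.sum_congr rfl fun n _ => ?_
      rw [map_smul, hF, smul_smul, pow_succ]
      ring_nf
  have hHsum : ∀ b : Fin (N + 1) → ℝ,
      H (∑ n, b n • φ n) = ∑ n, (b n * E n) • φ n := by
    intro b
    rw [map_sum]
    refine Finset.sum_congr rfl fun n _ => ?_
    rw [map_smul, heig, smul_smul]
  have hnum : ∀ k : ℕ, ⟪(F ^ k) ψ, H ((F ^ k) ψ)⟫ =
      ∑ n, (c n * f (E n) ^ k) ^ 2 * E n := by
    intro k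
    rw [hFk k, hHsum]
    rw [hφ.inner_sum]
    refine Finset.sum_congr rfl fun n _ => ?_
    simp [starRingEnd_apply]
    ring
  have hden : ∀ k : ℕ, ⟪(F ^ k) ψ, (F ^ k) ψ⟫ =
      ∑ n, (c n * f (E n) ^ k) ^ 2 := by
    intro k
    rw [hFk k, hφ.inner_sum]
    refine Finset.sum_congr rfl fun n _ => ?_
    simp [starRingEnd_apply]
    ring
  have hamne : f (E m) ≠ 0 := abs_pos.mp ham
  refine ⟨hR1, ⟨(∑ n ∈ Finset.univ.erase m, c n ^ 2 * |E n - E m|) / c m ^ 2, ?_⟩⟩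
  intro k
  set D := ∑ n, (c n * f (E n) ^ k) ^ 2 with hD
  have hDm : c m ^ 2 * (f (E m) ^ 2) ^ k ≤ D := by
    have : (c m * f (E m) ^ k) ^ 2 ≤ D :=
      Finset.single_le_sum (f := fun n => (c n * f (E n) ^ k) ^ 2)
        (fun n _ => sq_nonneg _) (Finset.mem_univ m)
    calc c m ^ 2 * (f (E m) ^ 2) ^ k = (c m * f (E m) ^ k) ^ 2 := by ring
    _ ≤ D := this
  have hDm0 : 0 < c m ^ 2 * (f (E m) ^ 2) ^ k :=
    mul_pos (by positivity) (pow_pos (by positivity) k)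
  have hD0 : 0 < D := lt_of_lt_of_le hDm0 hDm
  rw [hnum k, hden k, ← hD]
  have key : (∑ n, (c n * f (E n) ^ k) ^ 2 * E n) / D - E m =
      (∑ n ∈ Finset.univ.erase m, (c n * f (E n) ^ k) ^ 2 * (E n - E m)) / D := by
    rw [div_sub' hD0.ne', hD]
    congr 1
    rw [Finset.sum_mul, ← Finset.sum_sub_distrib]
    rw [← Finset.sum_erase (h := by simp [mul_comm]) (s := Finset.univ) (a := m)]
    · refine Finset.sum_congr rfl fun n _ => ?_
      ring
  rw [key]
  rw [abs_div, abs_of_pos hD0]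
  have hnumbound : |∑ n ∈ Finset.univ.erase m, (c n * f (E n) ^ k) ^ 2 * (E n - E m)| ≤
      (∑ n ∈ Finset.univ.erase m, c n ^ 2 * |E n - E m|) * ((R ^ 2) ^ k * (f (E m) ^ 2) ^ k) := by
    refine le_trans (Finset.abs_sum_le_sum_abs _ _) ?_
    rw [Finset.sum_mul]
    refine Finset.sum_le_sum fun n hn => ?_
    have hnm := (Finset.mem_erase.mp hn).1
    rw [abs_mul, abs_of_nonneg (sq_nonneg _)]
    have h1 : (c n * f (E n) ^ k) ^ 2 = c n ^ 2 * (f (E n) ^ 2) ^ k := by ring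
    rw [h1]
    have h2 : (f (E n) ^ 2) ^ k ≤ (R ^ 2) ^ k * (f (E m) ^ 2) ^ k := by
      calc (f (E n) ^ 2) ^ k ≤ (R ^ 2 * f (E m) ^ 2) ^ k :=
        pow_le_pow_left₀ (sq_nonneg _) (hsq n hnm) k
      _ = (R ^ 2) ^ k * (f (E m) ^ 2) ^ k := mul_pow _ _ _
    calc c n ^ 2 * (f (E n) ^ 2) ^ k * |E n - E m|
        ≤ c n ^ 2 * ((R ^ 2) ^ k * (f (E m) ^ 2) ^ k) * |E n - E m| := by
          exact mul_le_mul_of_nonneg_right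
            (mul_le_mul_of_nonneg_left h2 (sq_nonneg _)) (abs_nonneg _)
      _ = c n ^ 2 * |E n - E m| * ((R ^ 2) ^ k * (f (E m) ^ 2) ^ k) := by ring
  calc |∑ n ∈ Finset.univ.erase m, (c n * f (E n) ^ k) ^ 2 * (E n - E m)| / D
      ≤ ((∑ n ∈ Finset.univ.erase m, c n ^ 2 * |E n - E m|) * ((R ^ 2) ^ k * (f (E m) ^ 2) ^ k)) /
        (c m ^ 2 * (f (E m) ^ 2) ^ k) := by
        exact div_le_div₀ (by positivity) hnumbound hDm0 hDm
    _ = (∑ n ∈ Finset.univ.erase m, c n ^ 2 * |E n - E m|) / c m ^ 2 * R ^ (2 * k) := by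
        rw [pow_mul]
        field_simp
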